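/- Let K be a totally real number field and 𝒪⁺ its totally positive integers. For every δ ∈ 𝒪⁺, the number of partitions of δ into parts from 𝒪⁺ not divisible by 2 equals the number of partitions of δ into distinct parts from 𝒪⁺. -/

import Mathlib

open NumberField

/-- `x ∈ 𝓞 K` is totally positive if every real embedding of `K` sends it to a
positive real number. -/
def IsTotallyPositive (K : Type*) [Field K] [NumberField K] (x : 𝓞 K) : Prop :=
  ∀ φ : K →+* ℝ, 0 < φ (x : K)

namespace EulerTR

open Multiset

variable {K : Type*} [Field K] [NumberField K]

set_option synthInstance.maxHeartbeats 1000000 in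
instance : WfDvdMonoid (𝓞 K) := inferInstance

/-- A real embedding built from a complex embedding with real image. -/
noncomputable def realEmb (hTR : ∀ φ : K →+* ℂ, ∀ x : K, (φ x).im = 0) : K →+* ℝ :=
  letI φ : K →+* ℂ := Classical.arbitrary _
  { toFun := fun x => (φ x).re
    map_one' := by simp
    map_mul' := fun x y => by
      have hx := hTR φ x; have hy := hTR φ y
      simp [Complex.mul_re, hx, hy]
    map_zero' := by simp
    map_add' := fun x y => by simp }

lemma tp_ne_zero (hTR : ∀ φ : K →+* ℂ, ∀ x : K, (φ x).im = 0) {x : 𝓞 K}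
    (hx : IsTotallyPositive K x) : x ≠ 0 := by
  intro h
  have := hx (realEmb hTR)
  rw [h] at this
  simp at this

lemma not_isUnit_two : ¬ IsUnit (2 : 𝓞 K) := by
  intro h
  have h1 : IsUnit (Algebra.norm ℤ (2 : 𝓞 K)) := h.map (Algebra.norm ℤ)
  have b := NumberField.RingOfIntegers.basis K
  have h2 : Algebra.norm ℤ (2 : 𝓞 K)
      = 2 ^ Fintype.card (Module.Free.ChooseBasisIndex ℤ (𝓞 K)) := by
    rw [show (2 : 𝓞 K) = algebraMap ℤ (𝓞 K) 2 by simp]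
    exact Algebra.norm_algebraMap_of_basis b 2
  rw [h2, Int.isUnit_iff] at h1
  have hpos : 0 < Fintype.card (Module.Free.ChooseBasisIndex ℤ (𝓞 K)) := Fintype.card_pos
  have h3 : (2:ℤ) ≤ 2 ^ Fintype.card (Module.Free.ChooseBasisIndex ℤ (𝓞 K)) := by
    calc (2:ℤ) = 2^1 := (pow_one 2).symm
    _ ≤ _ := pow_le_pow_right₀ (by norm_num) hpos
  rcases h1 with h1 | h1 <;> omega

lemma two_ne_zero' : (2 : 𝓞 K) ≠ 0 := by
  intro h
  have : ((2 : 𝓞 K) : K) = 0 := by rw [h]; simp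
  push_cast at this
  norm_num at this

lemma fin2 {x : 𝓞 K} (hx : x ≠ 0) : FiniteMultiplicity (2 : 𝓞 K) x :=
  FiniteMultiplicity.of_not_isUnit not_isUnit_two hx

variable (K) in
/-- The 2-adic valuation. -/
noncomputable def vv (x : 𝓞 K) : ℕ := multiplicity 2 x

open scoped Classical in
variable (K) in
/-- The odd part. -/
noncomputable def op (x : 𝓞 K) : 𝓞 K :=
  if h : FiniteMultiplicity (2 : 𝓞 K) x then h.exists_eq_pow_mul_and_not_dvd.choose else x

lemma op_spec {x : 𝓞 K} (hx : x ≠ 0) :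
    x = 2 ^ vv K x * op K x ∧ ¬ (2 : 𝓞 K) ∣ op K x := by
  rw [op, dif_pos (fin2 hx)]
  exact (fin2 hx).exists_eq_pow_mul_and_not_dvd.choose_spec

omit [NumberField K] in
lemma odd_ne_zero {μ : 𝓞 K} (hμ : ¬ (2 : 𝓞 K) ∣ μ) : μ ≠ 0 :=
  fun h => hμ (h ▸ dvd_zero 2)

lemma decomp_unique_le {k j : ℕ} {μ ν : 𝓞 K} (hμ : ¬ (2:𝓞 K) ∣ μ) (hkj : k ≤ j)
    (h : 2 ^ k * μ = 2 ^ j * ν) : k = j ∧ μ = ν := by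
  obtain ⟨d, rfl⟩ := Nat.exists_eq_add_of_le hkj
  rw [pow_add, mul_assoc] at h
  have h2 : (2 : 𝓞 K) ^ k ≠ 0 := pow_ne_zero _ two_ne_zero'
  have hμν : μ = 2 ^ d * ν := mul_left_cancel₀ h2 h
  cases d with
  | zero => simpa using hμν
  | succ d => exact absurd ⟨2 ^ d * ν, by rw [hμν]; ring⟩ hμ

lemma decomp_unique {k j : ℕ} {μ ν : 𝓞 K} (hμ : ¬ (2:𝓞 K) ∣ μ) (hν : ¬ (2:𝓞 K) ∣ ν)
    (h : 2 ^ k * μ = 2 ^ j * ν) : k = j ∧ μ = ν := by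
  rcases le_total k j with hle | hle
  · exact decomp_unique_le hμ hle h
  · obtain ⟨h1, h2⟩ := decomp_unique_le hν hle h.symm
    exact ⟨h1.symm, h2.symm⟩

lemma vv_op_eq {k : ℕ} {μ : 𝓞 K} (hμ : ¬ (2:𝓞 K) ∣ μ) :
    vv K (2 ^ k * μ) = k ∧ op K (2 ^ k * μ) = μ := by
  have hx : (2:𝓞 K) ^ k * μ ≠ 0 :=
    mul_ne_zero (pow_ne_zero _ two_ne_zero') (odd_ne_zero hμ)
  obtain ⟨hs, hnd⟩ := op_spec hx
  exact decomp_unique hnd hμ hs.symm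

lemma pow_mul_op {x : 𝓞 K} (hx : x ≠ 0) : (2:𝓞 K) ^ vv K x * op K x = x :=
  (op_spec hx).1.symm

lemma tp_pow_mul_iff {k : ℕ} {μ : 𝓞 K} :
    IsTotallyPositive K (2 ^ k * μ) ↔ IsTotallyPositive K μ := by
  have key : ∀ φ : K →+* ℝ, φ (((2:𝓞 K) ^ k * μ : 𝓞 K) : K) = 2 ^ k * φ (μ : K) := by
    intro φ
    have e1 : (((2:𝓞 K) ^ k * μ : 𝓞 K) : K) = (2 : K) ^ k * (μ : K) := by
      exact_mod_cast rfl
    rw [e1, map_mul, map_pow, map_ofNat]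
  constructor
  · intro h φ
    have h1 := h φ
    rw [key φ] at h1
    have h2 : (0:ℝ) < 2 ^ k := by positivity
    nlinarith
  · intro h φ
    rw [key φ]
    have := h φ
    positivity

/-- Glaisher's map, distinct → odd direction (as a total function). -/
noncomputable def FF (K : Type*) [Field K] [NumberField K] :
    Multiset (𝓞 K) → Multiset (𝓞 K) :=
  fun m => m.bind fun x => Multiset.replicate (2 ^ vv K x) (op K x)

open scoped Classical in
/-- Glaisher's map, odd → distinct direction (as a total function). -/
noncomputable def GG (K : Type*) [Field K] [NumberField K] :
    Multiset (𝓞 K) → Multiset (𝓞 K) :=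
  fun m => m.toFinset.val.bind fun μ =>
    ((m.count μ).bitIndices : Multiset ℕ).map fun k => 2 ^ k * μ

lemma sum_FF {m : Multiset (𝓞 K)} (h : ∀ x ∈ m, x ≠ 0) : (FF K m).sum = m.sum := by
  induction m using Multiset.induction with
  | empty => simp [FF]
  | cons a s ih =>
    have ha : a ≠ 0 := h a (mem_cons_self a s)
    rw [FF, cons_bind, sum_add, sum_cons, ← FF]
    rw [ih (fun x hx => h x (mem_cons_of_mem hx))]
    congr 1
    rw [sum_replicate, nsmul_eq_mul]
    push_cast
    exact pow_mul_op ha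

lemma mem_FF {m : Multiset (𝓞 K)} {y : 𝓞 K} (hy : y ∈ FF K m) :
    ∃ x ∈ m, y = op K x := by
  rw [FF, mem_bind] at hy
  obtain ⟨x, hx, hy⟩ := hy
  rw [eq_of_mem_replicate hy]
  exact ⟨x, hx, rfl⟩

omit [NumberField K] in
lemma bind_replicate_pow (s : Multiset ℕ) (μ : 𝓞 K) :
    (s.bind fun k => Multiset.replicate (2 ^ k) μ)
      = Multiset.replicate ((s.map (2 ^ ·)).sum) μ := by
  induction s using Multiset.induction with
  | empty => simp
  | cons a s ih => simp [cons_bind, ih, replicate_add]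

open scoped Classical in
lemma FF_GG {m : Multiset (𝓞 K)} (h : ∀ x ∈ m, ¬ (2:𝓞 K) ∣ x) : FF K (GG K m) = m := by
  rw [FF, GG, bind_assoc]
  have step : ∀ μ ∈ m.toFinset.val,
      ((((m.count μ).bitIndices : Multiset ℕ).map fun k => (2:𝓞 K) ^ k * μ).bind
        fun x => Multiset.replicate (2 ^ vv K x) (op K x))
        = Multiset.replicate (m.count μ) μ := by
    intro μ hμ
    have hodd : ¬ (2:𝓞 K) ∣ μ := h μ (Multiset.mem_toFinset.mp hμ)
    rw [bind_map]
    have hrepl : ∀ k ∈ ((m.count μ).bitIndices : Multiset ℕ),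
        (Multiset.replicate (2 ^ vv K ((2:𝓞 K) ^ k * μ)) (op K ((2:𝓞 K)^k * μ)))
        = Multiset.replicate (2 ^ k) μ := by
      intro k _
      obtain ⟨h1, h2⟩ := vv_op_eq (k := k) hodd
      rw [h1, h2]
    rw [bind_congr hrepl, bind_replicate_pow]
    congr 1
    rw [Multiset.map_coe, Multiset.sum_coe, Nat.twoPowSum_bitIndices]
  rw [bind_congr step]
  have hsum : (m.toFinset.val.bind fun μ => Multiset.replicate (m.count μ) μ)
      = ∑ μ ∈ m.toFinset, m.count μ • ({μ} : Multiset (𝓞 K)) := by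
    rw [Finset.sum_eq_multiset_sum]
    induction m.toFinset.val using Multiset.induction with
    | empty => simp
    | cons a s ih => simp [cons_bind, ih, nsmul_singleton]
  rw [hsum, Multiset.toFinset_sum_count_nsmul_eq]

open scoped Classical in
lemma GG_mem {m : Multiset (𝓞 K)} {y : 𝓞 K} (hy : y ∈ GG K m) :
    ∃ μ ∈ m, ∃ k : ℕ, y = 2 ^ k * μ := by
  rw [GG, mem_bind] at hy
  obtain ⟨μ, hμ, hy⟩ := hy
  rw [Multiset.mem_map] at hy
  obtain ⟨k, _, rfl⟩ := hy
  exact ⟨μ, Multiset.mem_toFinset.mp hμ, k, rfl⟩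

open scoped Classical in
lemma GG_nodup {m : Multiset (𝓞 K)} (h : ∀ x ∈ m, ¬ (2:𝓞 K) ∣ x) : (GG K m).Nodup := by
  rw [GG, nodup_bind]
  constructor
  · intro μ hμ
    have hodd : ¬ (2:𝓞 K) ∣ μ := h μ (Multiset.mem_toFinset.mp hμ)
    apply Multiset.Nodup.map_on
    · intro k _ j _ hkj
      exact (decomp_unique hodd hodd hkj).1
    · exact (Nat.bitIndices_sorted).nodup
  · refine Multiset.Nodup.pairwise ?_ m.toFinset.nodup
    intro μ hμ ν hν hne
    have hoddμ : ¬ (2:𝓞 K) ∣ μ := h μ (Multiset.mem_toFinset.mp hμ)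
    have hoddν : ¬ (2:𝓞 K) ∣ ν := h ν (Multiset.mem_toFinset.mp hν)
    rw [Function.onFun, Multiset.disjoint_left]
    rintro x hx hx'
    obtain ⟨k, _, rfl⟩ := Multiset.mem_map.mp hx
    obtain ⟨j, _, hj⟩ := Multiset.mem_map.mp hx'
    exact hne ((decomp_unique hoddμ hoddν hj.symm).2)

open scoped Classical in
lemma count_FF {m : Multiset (𝓞 K)} (hnd : m.Nodup) (h0 : ∀ x ∈ m, x ≠ 0) (μ : 𝓞 K) :
    (FF K m).count μ
      = ∑ k ∈ ((⟨m, hnd⟩ : Finset (𝓞 K)).filter fun x => op K x = μ).image (vv K), 2 ^ k := by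
  rw [FF, count_bind]
  have h1 : ∀ x ∈ m, count μ (replicate (2 ^ vv K x) (op K x))
      = if op K x = μ then 2 ^ vv K x else 0 := by
    intro x _
    rw [count_replicate]
  rw [Multiset.map_congr rfl h1]
  have h2 : (m.map fun x => if op K x = μ then 2 ^ vv K x else 0).sum
      = ∑ x ∈ (⟨m, hnd⟩ : Finset (𝓞 K)), (if op K x = μ then 2 ^ vv K x else 0) := rfl
  rw [h2, ← Finset.sum_filter]
  refine (Finset.sum_image ?_).symm
  intro x hx y hy hxy
  rw [Finset.mem_coe, Finset.mem_filter, Finset.mem_mk] at hx hy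
  calc x = 2 ^ vv K x * op K x := (pow_mul_op (h0 x hx.1)).symm
  _ = 2 ^ vv K y * op K y := by rw [hxy, hx.2, hy.2]
  _ = y := pow_mul_op (h0 y hy.1)

open scoped Classical in
lemma FF_inj {m₁ m₂ : Multiset (𝓞 K)} (h₁ : m₁.Nodup) (h₂ : m₂.Nodup)
    (h01 : ∀ x ∈ m₁, x ≠ 0) (h02 : ∀ x ∈ m₂, x ≠ 0)
    (h : FF K m₁ = FF K m₂) : m₁ = m₂ := by
  have key : ∀ μ : 𝓞 K,
      ((⟨m₁, h₁⟩ : Finset (𝓞 K)).filter fun x => op K x = μ).image (vv K)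
      = ((⟨m₂, h₂⟩ : Finset (𝓞 K)).filter fun x => op K x = μ).image (vv K) := by
    intro μ
    have hsum : ∑ k ∈ ((⟨m₁, h₁⟩ : Finset (𝓞 K)).filter fun x => op K x = μ).image (vv K), 2 ^ k
        = ∑ k ∈ ((⟨m₂, h₂⟩ : Finset (𝓞 K)).filter fun x => op K x = μ).image (vv K), 2 ^ k := by
      rw [← count_FF h₁ h01 μ, ← count_FF h₂ h02 μ, h]
    exact Finset.geomSum_injective (le_refl 2) hsum
  rw [Multiset.Nodup.ext h₁ h₂]
  have main : ∀ (m₁ m₂ : Multiset (𝓞 K)) (h₁ : m₁.Nodup) (h₂ : m₂.Nodup)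
      (_ : ∀ x ∈ m₁, x ≠ 0) (h02 : ∀ x ∈ m₂, x ≠ 0)
      (_ : ∀ μ : 𝓞 K,
        ((⟨m₁, h₁⟩ : Finset (𝓞 K)).filter fun x => op K x = μ).image (vv K)
        = ((⟨m₂, h₂⟩ : Finset (𝓞 K)).filter fun x => op K x = μ).image (vv K))
      (x : 𝓞 K), x ∈ m₁ → x ∈ m₂ := by
    intro m₁ m₂ h₁ h₂ h01 h02 key x hx
    have hmem : vv K x ∈
        ((⟨m₁, h₁⟩ : Finset (𝓞 K)).filter fun y => op K y = op K x).image (vv K) :=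
      Finset.mem_image.mpr ⟨x, Finset.mem_filter.mpr ⟨hx, rfl⟩, rfl⟩
    rw [key (op K x)] at hmem
    obtain ⟨y, hy, hv⟩ := Finset.mem_image.mp hmem
    obtain ⟨hym, hyop⟩ := Finset.mem_filter.mp hy
    have hxy : y = x := by
      rw [← pow_mul_op (h02 y hym), hv, hyop, pow_mul_op (h01 x hx)]
    rw [← hxy]
    exact hym
  intro x
  exact ⟨main m₁ m₂ h₁ h₂ h01 h02 key x, main m₂ m₁ h₂ h₁ h02 h01 (fun μ => (key μ).symm) x⟩

end EulerTR

/-- Euler over totally real fields: the number of partitions of a totally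
positive `δ` into totally positive parts not divisible by `2` equals the number of
partitions of `δ` into distinct totally positive parts. -/
theorem euler_totally_real
    (K : Type*) [Field K] [NumberField K]
    (hTR : ∀ φ : K →+* ℂ, ∀ x : K, (φ x).im = 0)
    (δ : 𝓞 K) (hδ : IsTotallyPositive K δ) :
    {m : Multiset (𝓞 K) |
        (∀ x ∈ m, IsTotallyPositive K x ∧ ¬ (2 : 𝓞 K) ∣ x) ∧ m.sum = δ}.ncard =
    {m : Multiset (𝓞 K) |
        (∀ x ∈ m, IsTotallyPositive K x) ∧ m.Nodup ∧ m.sum = δ}.ncard := by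
  classical
  open EulerTR in
  set O := {m : Multiset (𝓞 K) |
      (∀ x ∈ m, IsTotallyPositive K x ∧ ¬ (2 : 𝓞 K) ∣ x) ∧ m.sum = δ} with hO
  set D := {m : Multiset (𝓞 K) |
      (∀ x ∈ m, IsTotallyPositive K x) ∧ m.Nodup ∧ m.sum = δ} with hD
  have hDtp : ∀ m ∈ D, ∀ x ∈ m, x ≠ 0 := by
    intro m hm x hx
    exact tp_ne_zero hTR (hm.1 x hx)
  have hmapF : ∀ m ∈ D, FF K m ∈ O := by
    intro m hm
    obtain ⟨htp, hnd, hsum⟩ := hm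
    constructor
    · intro y hy
      obtain ⟨x, hx, rfl⟩ := mem_FF hy
      have hx0 : x ≠ 0 := tp_ne_zero hTR (htp x hx)
      obtain ⟨hdec, hodd⟩ := op_spec hx0
      refine ⟨?_, hodd⟩
      have := htp x hx
      rw [hdec] at this
      exact tp_pow_mul_iff.mp this
    · rw [sum_FF (hDtp m ⟨htp, hnd, hsum⟩)]
      exact hsum
  have himg : FF K '' D = O := by
    apply Set.Subset.antisymm
    · rintro y ⟨m, hm, rfl⟩
      exact hmapF m hm
    · intro m hm
      obtain ⟨hparts, hsum⟩ := hm
      have hodd : ∀ x ∈ m, ¬ (2:𝓞 K) ∣ x := fun x hx => (hparts x hx).2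
      have hGGmem : ∀ y ∈ GG K m, ∃ μ ∈ m, ∃ k : ℕ, y = 2 ^ k * μ := fun y hy => GG_mem hy
      have hGG0 : ∀ y ∈ GG K m, y ≠ 0 := by
        intro y hy
        obtain ⟨μ, hμ, k, rfl⟩ := GG_mem hy
        exact mul_ne_zero (pow_ne_zero _ two_ne_zero') (odd_ne_zero (hodd μ hμ))
      refine ⟨GG K m, ⟨?_, GG_nodup hodd, ?_⟩, FF_GG hodd⟩
      · intro y hy
        obtain ⟨μ, hμ, k, rfl⟩ := GG_mem hy
        exact tp_pow_mul_iff.mpr (hparts μ hμ).1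
      · have := sum_FF hGG0
        rw [FF_GG hodd] at this
        rw [← this]
        exact hsum
  have hinj : Set.InjOn (FF K) D := by
    intro m₁ hm₁ m₂ hm₂ h
    exact FF_inj hm₁.2.1 hm₂.2.1 (hDtp m₁ hm₁) (hDtp m₂ hm₂) h
  rw [← himg, Set.ncard_image_of_injOn hinj]
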